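/- Let A = 1/(2(1 + π²/3)) and λ ≥ 0, and let C_l = A · (l!)^λ / l² for l ≥ 1. Then for all integers m ≥ 1 and 1 ≤ k ≤ m, Σ C_{l_1} · C_{l_2} ⋯ C_{l_k} ≤ C_m, where the sum runs over all k-tuples (l_1, …, l_k) of integers with each l_i ≥ 1 and l_1 + ⋯ + l_k = m. -/

import Mathlib

open Finset


lemma decomp (k m : ℕ) (f : ℕ → ℝ) :
    ∑ t ∈ Finset.Nat.antidiagonalTuple (k+1) m, ∏ i, f (t i)
      = ∑ p ∈ Finset.HasAntidiagonal.antidiagonal m,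
          f p.1 * ∑ s ∈ Finset.Nat.antidiagonalTuple k p.2, ∏ i, f (s i) := by
  simp_rw [Finset.mul_sum]
  rw [Finset.sum_sigma' (Finset.HasAntidiagonal.antidiagonal m) (fun p => Finset.Nat.antidiagonalTuple k p.2) (fun p s => f p.1 * ∏ i, f (s i))]
  refine Finset.sum_nbij' (i := fun t => (⟨(t 0, ∑ i : Fin k, t i.succ), Fin.tail t⟩ : (_ : ℕ × ℕ) × (Fin k → ℕ)))
    (fun q => Fin.cons q.1.1 q.2) ?_ ?_ ?_ ?_ ?_
  · intro t ht
    rw [Finset.Nat.mem_antidiagonalTuple, Fin.sum_univ_succ] at ht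
    simp only [Finset.mem_sigma, Finset.HasAntidiagonal.mem_antidiagonal, Finset.Nat.mem_antidiagonalTuple]
    exact ⟨ht, rfl⟩
  · intro q hq
    rw [Finset.mem_sigma, Finset.HasAntidiagonal.mem_antidiagonal, Finset.Nat.mem_antidiagonalTuple] at hq
    rw [Finset.Nat.mem_antidiagonalTuple, Fin.sum_cons, hq.2, hq.1]
  · intro t ht
    exact Fin.cons_self_tail t
  · intro q hq
    rw [Finset.mem_sigma, Finset.HasAntidiagonal.mem_antidiagonal, Finset.Nat.mem_antidiagonalTuple] at hq
    ext
    · simp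
    · simp [Fin.sum_cons, hq.2]
    · simp [Fin.tail_cons]
  · intro t ht
    rw [Fin.prod_univ_succ]
    rfl


lemma sum_inv_sq_le : ∀ n : ℕ, ∑ l ∈ Finset.Icc 1 n, (1:ℝ)/(l:ℝ)^2 ≤ 2 := by
  have h : ∀ n : ℕ, 1 ≤ n → ∑ l ∈ Finset.Icc 1 n, (1:ℝ)/(l:ℝ)^2 ≤ 2 - 1/n := by
    intro n hn
    induction n, hn using Nat.le_induction with
    | base => norm_num
    | succ n hn ih =>
      rw [Finset.sum_Icc_succ_top (by omega)]
      have h1 : (0:ℝ) < n := by positivity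
      have h2 : (0:ℝ) < (n:ℝ) + 1 := by positivity
      have : (1:ℝ)/((n:ℝ)+1)^2 ≤ 1/n - 1/(n+1) := by
        rw [div_sub_div _ _ (ne_of_gt h1) (ne_of_gt h2), div_le_div_iff₀ (by positivity) (by positivity)]
        nlinarith
      push_cast
      push_cast at ih this
      linarith
  intro n
  rcases Nat.eq_zero_or_pos n with h0 | h1
  · subst h0; simp
  · have h2 : (0:ℝ) < n := by positivity
    linarith [h n h1, one_div_pos.mpr h2]

lemma key2 (lam : ℝ) (hlam : 0 ≤ lam)
    (A : ℝ) (hA : A = 1 / (2 * (1 + Real.pi ^ 2 / 3)))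
    (C : ℕ → ℝ)
    (hC : ∀ l : ℕ, 1 ≤ l → C l = A * (l.factorial : ℝ) ^ lam / (l : ℝ) ^ 2)
    (m : ℕ) (hm : 2 ≤ m) :
    ∑ l ∈ Finset.Icc 1 (m-1), C l * C (m - l) ≤ C m := by
  have hpi : (3:ℝ) < Real.pi := Real.pi_gt_three
  have hA0 : 0 < A := by rw [hA]; positivity
  have h8A : 8 * A ≤ 1 := by
    rw [hA, mul_one_div, div_le_one (by positivity)]
    nlinarith
  have hm0 : (0:ℝ) < m := by positivity
  have hfm : (0:ℝ) < (m.factorial : ℝ) := by exact_mod_cast m.factorial_pos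
  set K : ℝ := 2 * A^2 * (m.factorial : ℝ) ^ lam / (m:ℝ)^2 with hK
  have hK0 : 0 ≤ K := by positivity
  have step : ∀ l ∈ Finset.Icc 1 (m-1),
      C l * C (m - l) ≤ K * (1/(l:ℝ)^2 + 1/((m-l:ℕ):ℝ)^2) := by
    intro l hl
    rw [Finset.mem_Icc] at hl
    have hl1 : 1 ≤ l := hl.1
    have hl2 : 1 ≤ m - l := by omega
    have hlr : (0:ℝ) < l := by exact_mod_cast hl1
    have hmlr : (0:ℝ) < ((m-l:ℕ):ℝ) := by exact_mod_cast hl2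
    have hcast : ((m-l:ℕ):ℝ) = (m:ℝ) - (l:ℝ) := by
      push_cast [Nat.cast_sub (by omega : l ≤ m)]; ring
    rw [hC l hl1, hC (m-l) hl2]
    have hfact : (l.factorial : ℝ) * ((m-l).factorial : ℝ) ≤ (m.factorial : ℝ) := by
      have hd := Nat.factorial_mul_factorial_dvd_factorial_add l (m - l)
      rw [show l + (m - l) = m by omega] at hd
      exact_mod_cast Nat.le_of_dvd m.factorial_pos hd
    have hfl : (0:ℝ) < (l.factorial : ℝ) := by exact_mod_cast l.factorial_pos
    have hfml : (0:ℝ) < ((m-l).factorial : ℝ) := by exact_mod_cast (m-l).factorial_pos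
    have hrpow : (l.factorial : ℝ) ^ lam * ((m-l).factorial : ℝ) ^ lam ≤ (m.factorial : ℝ) ^ lam := by
      rw [← Real.mul_rpow (le_of_lt hfl) (le_of_lt hfml)]
      exact Real.rpow_le_rpow (by positivity) hfact hlam
    have hsq : 1/((l:ℝ)^2 * ((m-l:ℕ):ℝ)^2) ≤ 2/(m:ℝ)^2 * (1/(l:ℝ)^2 + 1/((m-l:ℕ):ℝ)^2) := by
      rw [div_add_div _ _ (by positivity) (by positivity), div_mul_div_comm,
        div_le_div_iff₀ (by positivity) (by positivity)]
      have hsum : (l:ℝ) + ((m-l:ℕ):ℝ) = (m:ℝ) := by rw [hcast]; ring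
      have hm2 : (m:ℝ)^2 ≤ 2*((l:ℝ)^2 + ((m-l:ℕ):ℝ)^2) := by
        nlinarith [sq_nonneg ((l:ℝ) - ((m-l:ℕ):ℝ))]
      nlinarith [mul_le_mul_of_nonneg_right hm2
        (by positivity : (0:ℝ) ≤ (l:ℝ)^2 * ((m-l:ℕ):ℝ)^2)]
    calc A * (l.factorial : ℝ) ^ lam / (l:ℝ)^2 * (A * ((m-l).factorial : ℝ) ^ lam / ((m-l:ℕ):ℝ)^2)
        = A^2 * ((l.factorial : ℝ) ^ lam * ((m-l).factorial : ℝ) ^ lam) * (1/((l:ℝ)^2 * ((m-l:ℕ):ℝ)^2)) := by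
          ring
      _ ≤ A^2 * (m.factorial : ℝ) ^ lam * (2/(m:ℝ)^2 * (1/(l:ℝ)^2 + 1/((m-l:ℕ):ℝ)^2)) := by
          apply mul_le_mul
          · exact mul_le_mul_of_nonneg_left hrpow (by positivity)
          · exact hsq
          · positivity
          · positivity
      _ = K * (1/(l:ℝ)^2 + 1/((m-l:ℕ):ℝ)^2) := by rw [hK]; ring
  have hreflect : ∑ l ∈ Finset.Icc 1 (m-1), 1/((m-l:ℕ):ℝ)^2
      = ∑ l ∈ Finset.Icc 1 (m-1), 1/(l:ℝ)^2 := by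
    refine Finset.sum_nbij' (fun l => m - l) (fun l => m - l) ?_ ?_ ?_ ?_ ?_
    · simp only [Finset.mem_Icc]; intros; omega
    · simp only [Finset.mem_Icc]; intros; omega
    · simp only [Finset.mem_Icc]; intros; omega
    · simp only [Finset.mem_Icc]; intros a ha; omega
    · intro l hl
      simp only [Finset.mem_Icc] at hl
      rfl
  calc ∑ l ∈ Finset.Icc 1 (m-1), C l * C (m - l)
      ≤ ∑ l ∈ Finset.Icc 1 (m-1), K * (1/(l:ℝ)^2 + 1/((m-l:ℕ):ℝ)^2) :=
        Finset.sum_le_sum step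
    _ = K * (∑ l ∈ Finset.Icc 1 (m-1), 1/(l:ℝ)^2 + ∑ l ∈ Finset.Icc 1 (m-1), 1/((m-l:ℕ):ℝ)^2) := by
        rw [← Finset.mul_sum, Finset.sum_add_distrib]
    _ ≤ K * (2 + 2) := by
        apply mul_le_mul_of_nonneg_left _ hK0
        rw [hreflect]
        have := sum_inv_sq_le (m-1)
        linarith
    _ ≤ C m := by
        rw [hC m (by omega), hK]
        rw [div_mul_eq_mul_div, div_le_div_iff₀ (by positivity) (by positivity)]
        have h1 : (0:ℝ) < (m.factorial : ℝ) ^ lam := by positivity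
        have h2 : 8*A^2 ≤ A := by nlinarith
        have h3 : (0:ℝ) < (m.factorial : ℝ)^lam * (m:ℝ)^2 := by positivity
        calc 2 * A ^ 2 * (m.factorial:ℝ) ^ lam * (2 + 2) * (m:ℝ) ^ 2
            = 8 * A^2 * ((m.factorial:ℝ)^lam * (m:ℝ)^2) := by ring
          _ ≤ A * ((m.factorial:ℝ)^lam * (m:ℝ)^2) :=
              mul_le_mul_of_nonneg_right h2 (le_of_lt h3)
          _ = A * (m.factorial:ℝ)^lam * (m:ℝ)^2 := by ring

/-- Iterated form (2.13) of the key lemma: the sum of `C_{l₁} ⋯ C_{l_k}` over all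
`k`-tuples of positive integers with `l₁ + ⋯ + l_k = m` is at most `C_m`. -/
theorem stmt_6 (lam : ℝ) (hlam : 0 ≤ lam)
    (A : ℝ) (hA : A = 1 / (2 * (1 + Real.pi ^ 2 / 3)))
    (C : ℕ → ℝ)
    (hC : ∀ l : ℕ, 1 ≤ l → C l = A * (l.factorial : ℝ) ^ lam / (l : ℝ) ^ 2) :
    ∀ m k : ℕ, 1 ≤ k → k ≤ m →
      ∑ t ∈ (Finset.Nat.antidiagonalTuple k m).filter (fun t => ∀ i, 1 ≤ t i),
        ∏ i, C (t i) ≤ C m := by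
  have hA0 : 0 < A := by rw [hA]; positivity
  have hCpos : ∀ l : ℕ, 1 ≤ l → 0 < C l := by
    intro l hl
    rw [hC l hl]
    have h1 : (0:ℝ) < (l.factorial : ℝ) := by exact_mod_cast l.factorial_pos
    have h2 : (0:ℝ) < (l:ℝ) := by exact_mod_cast hl
    positivity
  set D : ℕ → ℝ := fun l => if l = 0 then 0 else C l with hD
  have hDnonneg : ∀ l, 0 ≤ D l := by
    intro l
    rw [hD]
    dsimp only
    split
    · exact le_refl 0
    · exact le_of_lt (hCpos l (by omega))
  -- filtered sum of C equals full sum of D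
  have hfilter : ∀ k m : ℕ,
      ∑ t ∈ (Finset.Nat.antidiagonalTuple k m).filter (fun t => ∀ i, 1 ≤ t i),
        ∏ i, C (t i)
      = ∑ t ∈ Finset.Nat.antidiagonalTuple k m, ∏ i, D (t i) := by
    intro k m
    have e1 : ∑ t ∈ (Finset.Nat.antidiagonalTuple k m).filter (fun t => ∀ i, 1 ≤ t i),
        ∏ i, D (t i) = ∑ t ∈ Finset.Nat.antidiagonalTuple k m, ∏ i, D (t i) := by
      apply Finset.sum_filter_of_ne
      intro t _ hne i
      by_contra h
      apply hne
      apply Finset.prod_eq_zero (Finset.mem_univ i)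
      rw [hD]
      simp only
      rw [if_pos (by omega)]
    rw [← e1]
    apply Finset.sum_congr rfl
    intro t ht
    rw [Finset.mem_filter] at ht
    apply Finset.prod_congr rfl
    intro i _
    have := ht.2 i
    rw [hD]
    simp only
    rw [if_neg (by omega)]
  -- the filtered set is empty when m < k
  have hempty : ∀ k m : ℕ, m < k →
      ∑ t ∈ Finset.Nat.antidiagonalTuple k m, ∏ i, D (t i) = 0 := by
    intro k m hmk
    rw [← hfilter]
    rw [Finset.filter_false_of_mem, Finset.sum_empty]
    intro t ht hall
    rw [Finset.Nat.mem_antidiagonalTuple] at ht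
    have : (k:ℕ) ≤ ∑ i, t i := by
      calc (k:ℕ) = ∑ _i : Fin k, 1 := by simp
        _ ≤ ∑ i, t i := Finset.sum_le_sum (fun i _ => hall i)
    omega
  -- main induction
  have main : ∀ k : ℕ, 1 ≤ k → ∀ m : ℕ, k ≤ m →
      ∑ t ∈ Finset.Nat.antidiagonalTuple k m, ∏ i, D (t i) ≤ C m := by
    intro k hk
    induction k, hk using Nat.le_induction with
    | base =>
      intro m hm
      rw [Finset.Nat.antidiagonalTuple_one, Finset.sum_singleton]
      rw [show (∏ i : Fin 1, D (![m] i)) = D m by simp]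
      rw [hD]
      simp only
      rw [if_neg (by omega)]
    | succ k hk ih =>
      intro m hm
      rw [decomp]
      have hbound : ∀ p ∈ Finset.HasAntidiagonal.antidiagonal m,
          D p.1 * ∑ s ∈ Finset.Nat.antidiagonalTuple k p.2, ∏ i, D (s i)
            ≤ D p.1 * D p.2 := by
        intro p _
        apply mul_le_mul_of_nonneg_left _ (hDnonneg p.1)
        rcases lt_or_ge p.2 k with h | h
        · rw [hempty k p.2 h]; exact hDnonneg p.2
        · have h1 : 1 ≤ p.2 := le_trans hk h
          calc ∑ s ∈ Finset.Nat.antidiagonalTuple k p.2, ∏ i, D (s i)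
              ≤ C p.2 := ih p.2 h
            _ = D p.2 := by rw [hD]; simp only; rw [if_neg (by omega)]
      calc ∑ p ∈ Finset.HasAntidiagonal.antidiagonal m,
            D p.1 * ∑ s ∈ Finset.Nat.antidiagonalTuple k p.2, ∏ i, D (s i)
          ≤ ∑ p ∈ Finset.HasAntidiagonal.antidiagonal m, D p.1 * D p.2 := Finset.sum_le_sum hbound
        _ = ∑ l ∈ Finset.range (m+1), D l * D (m - l) := by
            rw [Finset.Nat.sum_antidiagonal_eq_sum_range_succ_mk]
        _ = ∑ l ∈ Finset.Icc 1 (m-1), C l * C (m - l) := by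
            rw [← Finset.sum_subset (s₁ := Finset.Icc 1 (m-1))]
            · apply Finset.sum_congr rfl
              intro l hl
              rw [Finset.mem_Icc] at hl
              rw [hD]
              simp only
              rw [if_neg (by omega), if_neg (by omega)]
            · intro l hl
              rw [Finset.mem_Icc] at hl
              rw [Finset.mem_range]
              omega
            · intro l hl hnl
              rw [Finset.mem_range] at hl
              rw [Finset.mem_Icc] at hnl
              have : l = 0 ∨ l = m := by omega
              rcases this with h | h
              · rw [h, hD]; simp
              · rw [h, hD]; simp
        _ ≤ C m := key2 lam hlam A hA C hC m (by omega)
  intro m k hk hkm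
  rw [hfilter]
  exact main k hk m hkm
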